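/- Let D be a closed symmetric densely defined operator on a complex Hilbert space H (so D ⊆ D*), and let 𝒜 ⊆ B(H) be a subalgebra closed under adjoints such that every a ∈ 𝒜 maps Dom D* into Dom D and the commutator [D*,a] := Da − aD*, defined on Dom D*, is bounded. Let p be the orthogonal projection onto the closed linear span of {ah : a ∈ 𝒜, h ∈ H}. Suppose (u_n) is a sequence in 𝒜 with sup_n (‖u_n‖ + ‖[D*,u_n]‖) < ∞ such that for every a ∈ 𝒜: ‖u_na − a‖ → 0, ‖au_n − a‖ → 0, ‖[D*, u_na − a]‖ → 0 and ‖[D*, au_n − a]‖ → 0. Then: (1) u_n → p and u_n* → p in the strong operator topology; (2) p[D*,u_n]p → 0 in the strong operator topology; (3) if in addition the sequence (Du_ne) converges in H for every e ∈ Dom D*, then p maps Dom D* into Dom D, the operator Dp − pD* is bounded on Dom D*, and [D*,u_n]e → (Dp − pD*)e for every e ∈ Dom D*. -/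

import Mathlib

set_option synthInstance.maxHeartbeats 1000000
set_option maxHeartbeats 1000000

open Filter Topology
open scoped Classical

/-- Application of a partially defined operator, with junk value `0` off the domain. -/
noncomputable def pApply {H : Type*} [NormedAddCommGroup H] [InnerProductSpace ℂ H]
    (D : H →ₗ.[ℂ] H) (x : H) : H :=
  if hm : x ∈ D.domain then D ⟨x, hm⟩ else 0

lemma pApply_of_mem {H : Type*} [NormedAddCommGroup H] [InnerProductSpace ℂ H]
    (D : H →ₗ.[ℂ] H) {x : H} (hx : x ∈ D.domain) : pApply D x = D ⟨x, hx⟩ := dif_pos hx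

lemma pApply_sub {H : Type*} [NormedAddCommGroup H] [InnerProductSpace ℂ H]
    (D : H →ₗ.[ℂ] H) {x y : H} (hx : x ∈ D.domain) (hy : y ∈ D.domain) :
    pApply D (x - y) = pApply D x - pApply D y := by
  rw [pApply_of_mem D (sub_mem hx hy), pApply_of_mem D hx, pApply_of_mem D hy, ← D.map_sub]
  rfl

lemma tendsto_zero_of_dense {H : Type*} [NormedAddCommGroup H] [InnerProductSpace ℂ H]
    (f : ℕ → H →L[ℂ] H) (B : ℝ) (hB : ∀ n (x : H), ‖f n x‖ ≤ B * ‖x‖)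
    (s : Set H) (hs : ∀ x ∈ s, Tendsto (fun n => f n x) atTop (𝓝 0)) :
    ∀ x ∈ closure ((Submodule.span ℂ s : Submodule ℂ H) : Set H),
      Tendsto (fun n => f n x) atTop (𝓝 0) := by
  have hB' : ∀ n (x : H), ‖f n x‖ ≤ (max B 0) * ‖x‖ := fun n x =>
    (hB n x).trans (mul_le_mul_of_nonneg_right (le_max_left _ _) (norm_nonneg _))
  set B' := max B 0 with hB'def
  have hB'0 : 0 ≤ B' := le_max_right _ _
  have hspan : ∀ x ∈ Submodule.span ℂ s, Tendsto (fun n => f n x) atTop (𝓝 0) := by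
    intro x hx
    induction hx using Submodule.span_induction with
    | mem x hx => exact hs x hx
    | zero => simp
    | add x y _ _ hx hy => simpa using hx.add hy
    | smul c x _ hx => simpa using hx.const_smul c
  intro x hx
  rw [NormedAddCommGroup.tendsto_nhds_zero]
  intro ε hε
  obtain ⟨y, hy, hxy⟩ : ∃ y ∈ (Submodule.span ℂ s : Set H), dist x y < ε / (2 * (B' + 1)) :=
    Metric.mem_closure_iff.mp hx _ (by positivity)
  have hy0 := hspan y hy
  rw [NormedAddCommGroup.tendsto_nhds_zero] at hy0
  filter_upwards [hy0 (ε/2) (by positivity)] with n hn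
  have h1 : ‖f n x‖ ≤ ‖f n (x - y)‖ + ‖f n y‖ := by
    have : f n x = f n (x - y) + f n y := by rw [map_sub]; abel
    rw [this]; exact norm_add_le _ _
  have h2 : ‖f n (x - y)‖ ≤ B' * ‖x - y‖ := hB' n _
  have h3 : ‖x - y‖ < ε / (2 * (B' + 1)) := by rwa [dist_eq_norm] at hxy
  have h4 : B' * ‖x - y‖ < ε / 2 := by
    have h5 : (B' + 1) * ‖x - y‖ < (B' + 1) * (ε / (2 * (B' + 1))) :=
      mul_lt_mul_of_pos_left h3 (by positivity)
    have h6 : (B' + 1) * (ε / (2 * (B' + 1))) = ε / 2 := by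
      field_simp
    nlinarith [norm_nonneg (x - y)]
  linarith

/-- Let `D` be a closed symmetric densely defined operator on a complex
Hilbert space `H`, and `𝒜 ⊆ B(H)` a subalgebra closed under adjoints such that every
`a ∈ 𝒜` maps `Dom D*` into `Dom D` and the commutator `[D*,a] := Da − aD*` is bounded on
`Dom D*`.  Let `p` be the orthogonal projection onto the closed linear span of
`{ah : a ∈ 𝒜, h ∈ H}`.  If `(u_n)` is a sequence in `𝒜`, uniformly bounded together with
its commutators, which is an approximate unit for `𝒜` in the Lipschitz sense, then:
(1) `u_n → p` and `u_n* → p` strongly; (2) `p[D*,u_n]p → 0` strongly;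
(3) if moreover `(D u_n e)` converges for every `e ∈ Dom D*`, then `p` maps `Dom D*`
into `Dom D`, `Dp − pD*` is bounded on `Dom D*`, and `[D*,u_n]e → (Dp − pD*)e` for all
`e ∈ Dom D*`. -/
theorem statement4
    {H : Type*} [NormedAddCommGroup H] [InnerProductSpace ℂ H] [CompleteSpace H]
    -- D closed, symmetric, densely defined
    (D : H →ₗ.[ℂ] H) (hdense : Dense (D.domain : Set H))
    (hclosed : D.IsClosed) (hsym : D ≤ D.adjoint)
    -- the *-closed subalgebra 𝒜 of B(H)
    (A : NonUnitalSubalgebra ℂ (H →L[ℂ] H))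
    (hAstar : ∀ a ∈ A, ContinuousLinearMap.adjoint a ∈ A)
    -- each a ∈ 𝒜 maps Dom D* into Dom D, with bounded commutator [D*,a] = Da − aD*
    (hmap : ∀ a ∈ A, ∀ h ∈ D.adjoint.domain, a h ∈ D.domain)
    (hbddcomm : ∀ a ∈ A, ∃ M : ℝ, ∀ h : D.adjoint.domain,
      ‖pApply D (a h) - a (D.adjoint h)‖ ≤ M * ‖(h : H)‖)
    -- the sequence (u_n) in 𝒜, uniformly bounded together with its commutators
    (u : ℕ → H →L[ℂ] H) (hu : ∀ n, u n ∈ A)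
    (C : ℝ)
    (huC : ∀ n, ‖u n‖ ≤ C ∧ ∀ h : D.adjoint.domain,
      ‖pApply D (u n (h : H)) - u n (D.adjoint h)‖ ≤ C * ‖(h : H)‖)
    -- approximate unit conditions
    (hau_left : ∀ a ∈ A, Tendsto (fun n => ‖u n * a - a‖) atTop (𝓝 0))
    (hau_right : ∀ a ∈ A, Tendsto (fun n => ‖a * u n - a‖) atTop (𝓝 0))
    (hau_comm_left : ∀ a ∈ A, ∃ ε : ℕ → ℝ, Tendsto ε atTop (𝓝 0) ∧
      ∀ n, ∀ h : D.adjoint.domain,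
        ‖pApply D ((u n * a - a) (h : H)) - (u n * a - a) (D.adjoint h)‖ ≤ ε n * ‖(h : H)‖)
    (hau_comm_right : ∀ a ∈ A, ∃ ε : ℕ → ℝ, Tendsto ε atTop (𝓝 0) ∧
      ∀ n, ∀ h : D.adjoint.domain,
        ‖pApply D ((a * u n - a) (h : H)) - (a * u n - a) (D.adjoint h)‖ ≤ ε n * ‖(h : H)‖) :
    -- p : the orthogonal projection onto the closed linear span of {a h : a ∈ 𝒜, h ∈ H}
    ∀ p : H →L[ℂ] H,
      IsSelfAdjoint p → p ∘L p = p →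
      Set.range p =
        closure ((Submodule.span ℂ {x : H | ∃ a ∈ A, ∃ h : H, a h = x} : Submodule ℂ H) : Set H) →
      -- (1) u_n → p and u_n* → p in the strong operator topology
      ((∀ x : H, Tendsto (fun n => u n x) atTop (𝓝 (p x))) ∧
       (∀ x : H, Tendsto (fun n => ContinuousLinearMap.adjoint (u n) x) atTop (𝓝 (p x)))) ∧
      -- (2) p [D*,u_n] p → 0 in the strong operator topology (via the bounded extensions)
      (∀ T : ℕ → H →L[ℂ] H,
        (∀ n, ∀ h : D.adjoint.domain,
          T n (h : H) = pApply D (u n (h : H)) - u n (D.adjoint h)) →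
        ∀ x : H, Tendsto (fun n => p (T n (p x))) atTop (𝓝 0)) ∧
      -- (3)
      ((∀ e : D.adjoint.domain, ∃ y : H, Tendsto (fun n => pApply D (u n (e : H))) atTop (𝓝 y)) →
        (∀ e : D.adjoint.domain, p (e : H) ∈ D.domain) ∧
        (∃ M : ℝ, ∀ e : D.adjoint.domain,
          ‖pApply D (p (e : H)) - p (D.adjoint e)‖ ≤ M * ‖(e : H)‖) ∧
        (∀ e : D.adjoint.domain,
          Tendsto (fun n => pApply D (u n (e : H)) - u n (D.adjoint e)) atTop
            (𝓝 (pApply D (p (e : H)) - p (D.adjoint e))))) := by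
  intro p hp_sa hp_idem hp_range
  have hC0 : 0 ≤ C := le_trans (norm_nonneg _) (huC 0).1
  have hpp : ∀ x : H, p (p x) = p x := by
    intro x
    have := congrFun (congrArg (DFunLike.coe) hp_idem) x
    simpa using this
  have hadj_p : ContinuousLinearMap.adjoint p = p := by
    rw [← ContinuousLinearMap.star_eq_adjoint]; exact hp_sa.star_eq
  have hmemS : ∀ a ∈ A, ∀ h : H, a h ∈ Set.range p := by
    intro a ha h
    rw [hp_range]
    exact subset_closure (Submodule.subset_span ⟨a, ha, h, rfl⟩)
  -- elements of A kill the orthogonal complement of range p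
  have hkill : ∀ v ∈ A, ∀ x : H, v (x - p x) = 0 := by
    intro v hv x
    have hpw : p (x - p x) = 0 := by rw [map_sub, hpp, sub_self]
    obtain ⟨z, hz⟩ := hmemS _ (mul_mem (hAstar v hv) hv) (x - p x)
    have hinner : (inner ℂ (v (x - p x)) (v (x - p x)) : ℂ) = 0 := by
      have e1 : (inner ℂ (v (x - p x)) (v (x - p x)) : ℂ)
          = inner ℂ (x - p x) ((ContinuousLinearMap.adjoint v) (v (x - p x))) :=
        (ContinuousLinearMap.adjoint_inner_right v _ _).symm
      have e2 : (ContinuousLinearMap.adjoint v) (v (x - p x))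
          = (ContinuousLinearMap.adjoint v * v) (x - p x) := rfl
      have e3 : (inner ℂ (x - p x) (p z) : ℂ) = inner ℂ (p (x - p x)) z := by
        have h5 := ContinuousLinearMap.adjoint_inner_right p (x - p x) z
        rwa [hadj_p] at h5
      rw [e1, e2, ← hz, e3, hpw, inner_zero_left]
    exact inner_self_eq_zero.mp hinner
  -- the key strong-convergence lemma
  have strong : ∀ (v : ℕ → H →L[ℂ] H), (∀ n, v n ∈ A) → (∀ n, ‖v n‖ ≤ C) →
      (∀ a ∈ A, Tendsto (fun n => ‖v n * a - a‖) atTop (𝓝 0)) →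
      ∀ x : H, Tendsto (fun n => v n x) atTop (𝓝 (p x)) := by
    intro v hv hvC hva x
    have key := tendsto_zero_of_dense (fun n => v n - ContinuousLinearMap.id ℂ H) (C + 1)
      (by
        intro n y
        have h1 : ‖(v n - ContinuousLinearMap.id ℂ H) y‖ = ‖v n y - y‖ := by
          simp [ContinuousLinearMap.sub_apply]
        rw [h1]
        have h2 := (v n).le_opNorm y
        have h3 := norm_sub_le (v n y) y
        nlinarith [hvC n, norm_nonneg y])
      {x : H | ∃ a ∈ A, ∃ h : H, a h = x}
      (by
        rintro y ⟨a, ha, h, rfl⟩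
        refine squeeze_zero_norm (a := fun n => ‖v n * a - a‖ * ‖h‖) ?_ ?_
        · intro n
          have h1 : (v n - ContinuousLinearMap.id ℂ H) (a h) = (v n * a - a) h := by
            simp [ContinuousLinearMap.sub_apply, ContinuousLinearMap.mul_apply]
          rw [h1]
          exact (v n * a - a).le_opNorm h
        · simpa using (hva a ha).mul_const ‖h‖)
    have hpx : p x ∈ closure
        ((Submodule.span ℂ {x : H | ∃ a ∈ A, ∃ h : H, a h = x} : Submodule ℂ H) : Set H) := by
      rw [← hp_range]; exact ⟨x, rfl⟩
    have h1 : Tendsto (fun n => v n (p x) - p x) atTop (𝓝 0) := by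
      simpa [ContinuousLinearMap.sub_apply] using key (p x) hpx
    have h2 : Tendsto (fun n => v n (p x)) atTop (𝓝 (p x)) := tendsto_sub_nhds_zero_iff.mp h1
    have h3 : ∀ n, v n (p x) = v n x := by
      intro n
      have h0 := hkill (v n) (hv n) x
      have h4 : v n x - v n (p x) = 0 := by rw [← map_sub]; exact h0
      have := eq_of_sub_eq_zero h4
      exact this.symm
    exact h2.congr h3
  have hstrong_u : ∀ x : H, Tendsto (fun n => u n x) atTop (𝓝 (p x)) :=
    strong u hu (fun n => (huC n).1) hau_left
  have hstrong_us : ∀ x : H,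
      Tendsto (fun n => ContinuousLinearMap.adjoint (u n) x) atTop (𝓝 (p x)) := by
    apply strong
    · intro n; exact hAstar _ (hu n)
    · intro n
      rw [ContinuousLinearMap.adjoint.norm_map]
      exact (huC n).1
    · intro a ha
      have h1 := hau_right (ContinuousLinearMap.adjoint a) (hAstar a ha)
      have heq : ∀ n, ‖ContinuousLinearMap.adjoint a * u n - ContinuousLinearMap.adjoint a‖
          = ‖ContinuousLinearMap.adjoint (u n) * a - a‖ := by
        intro n
        rw [← ContinuousLinearMap.adjoint.norm_map
          (ContinuousLinearMap.adjoint a * u n - ContinuousLinearMap.adjoint a)]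
        congr 1
        rw [map_sub, ContinuousLinearMap.mul_def, ContinuousLinearMap.adjoint_comp,
          ContinuousLinearMap.adjoint_adjoint, ContinuousLinearMap.mul_def]
      exact h1.congr heq
  refine ⟨⟨hstrong_u, hstrong_us⟩, ?_, ?_⟩
  · -- part (2)
    intro T hT x
    have hDdense : Dense (D.adjoint.domain : Set H) :=
      hdense.mono (fun y hy => hsym.1 hy)
    have hTb : ∀ n (y : H), ‖T n y‖ ≤ C * ‖y‖ := by
      intro n y
      have hcl : IsClosed {y : H | ‖T n y‖ ≤ C * ‖y‖} :=
        isClosed_le ((T n).continuous.norm) (continuous_const.mul continuous_norm)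
      have hsub : (D.adjoint.domain : Set H) ⊆ {y : H | ‖T n y‖ ≤ C * ‖y‖} := by
        intro y hy
        have h1 := hT n ⟨y, hy⟩
        have h2 := (huC n).2 ⟨y, hy⟩
        simpa [h1] using h2
      exact hcl.closure_subset_iff.mpr hsub (hDdense y)
    set s' : Set H := {x : H | ∃ a ∈ A, ∃ h : D.adjoint.domain, a (h : H) = x} with hs'
    have hgen : ∀ y ∈ s', Tendsto (fun n => (p ∘L T n) y) atTop (𝓝 0) := by
      rintro y ⟨a, ha, h', rfl⟩
      obtain ⟨ε, hε0, hεb⟩ := hau_comm_left a ha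
      set e : H := (h' : H) with he
      have mem1 : a e ∈ D.domain := hmap a ha e h'.2
      have memstar : a e ∈ D.adjoint.domain := hsym.1 mem1
      have hid : ∀ n, T n (a e)
          = (pApply D ((u n * a - a) e) - (u n * a - a) (D.adjoint h'))
            + ((pApply D (a e) - a (D.adjoint h'))
               - (u n (pApply D (a e)) - u n (a (D.adjoint h')))) := by
        intro n
        have mem2 : u n (a e) ∈ D.domain := hmap (u n) (hu n) (a e) memstar
        have hTn : T n (a e) = pApply D (u n (a e)) - u n (D.adjoint ⟨a e, memstar⟩) :=
          hT n ⟨a e, memstar⟩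
        have h1 : D.adjoint ⟨a e, memstar⟩ = pApply D (a e) := by
          rw [pApply_of_mem D mem1]
          exact (hsym.2
            (rfl : ((⟨a e, mem1⟩ : D.domain) : H) = ((⟨a e, memstar⟩ : D.adjoint.domain) : H))).symm
        have h2 : (u n * a - a) e = u n (a e) - a e := by
          simp [ContinuousLinearMap.sub_apply, ContinuousLinearMap.mul_apply]
        have h3 : pApply D ((u n * a - a) e) = pApply D (u n (a e)) - pApply D (a e) := by
          rw [h2, pApply_sub D mem2 mem1]
        have h4 : (u n * a - a) (D.adjoint h') = u n (a (D.adjoint h')) - a (D.adjoint h') := by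
          simp [ContinuousLinearMap.sub_apply, ContinuousLinearMap.mul_apply]
        rw [hTn, h1, h3, h4]
        abel
      have t1 : Tendsto
          (fun n => p (pApply D ((u n * a - a) e) - (u n * a - a) (D.adjoint h')))
          atTop (𝓝 0) := by
        refine squeeze_zero_norm (a := fun n => ‖p‖ * (ε n * ‖e‖)) ?_ ?_
        · intro n
          calc ‖p (pApply D ((u n * a - a) e) - (u n * a - a) (D.adjoint h'))‖
              ≤ ‖p‖ * ‖pApply D ((u n * a - a) e) - (u n * a - a) (D.adjoint h')‖ :=
                p.le_opNorm _
            _ ≤ ‖p‖ * (ε n * ‖e‖) :=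
                mul_le_mul_of_nonneg_left (hεb n h') (norm_nonneg p)
        · simpa using (hε0.mul_const ‖e‖).const_mul ‖p‖
      have t2 : Tendsto
          (fun n => p ((pApply D (a e) - a (D.adjoint h'))
            - (u n (pApply D (a e)) - u n (a (D.adjoint h'))))) atTop (𝓝 0) := by
        set w : H := pApply D (a e) - a (D.adjoint h') with hw
        have hwn : ∀ n, (pApply D (a e) - a (D.adjoint h'))
            - (u n (pApply D (a e)) - u n (a (D.adjoint h'))) = w - u n w := by
          intro n; rw [hw, map_sub]
        have hc : Tendsto (fun n => p (u n w)) atTop (𝓝 (p (p w))) :=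
          (p.continuous.tendsto (p w)).comp (hstrong_u w)
        rw [hpp] at hc
        have hsubz : Tendsto (fun n => p w - p (u n w)) atTop (𝓝 (p w - p w)) :=
          tendsto_const_nhds.sub hc
        rw [sub_self] at hsubz
        refine hsubz.congr fun n => ?_
        rw [← map_sub, hwn n]
      have hcomb : Tendsto (fun n => p (T n (a e))) atTop (𝓝 0) := by
        have heq : (fun n => p (T n (a e)))
            = fun n => p (pApply D ((u n * a - a) e) - (u n * a - a) (D.adjoint h'))
              + p ((pApply D (a e) - a (D.adjoint h'))
                - (u n (pApply D (a e)) - u n (a (D.adjoint h')))) := by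
          funext n; rw [hid n, map_add]
        rw [heq]
        simpa using t1.add t2
      simpa [ContinuousLinearMap.comp_apply] using hcomb
    have hkey := tendsto_zero_of_dense (fun n => p ∘L T n) (‖p‖ * C)
      (by
        intro n y
        calc ‖(p ∘L T n) y‖ = ‖p (T n y)‖ := rfl
          _ ≤ ‖p‖ * ‖T n y‖ := p.le_opNorm _
          _ ≤ ‖p‖ * (C * ‖y‖) := mul_le_mul_of_nonneg_left (hTb n y) (norm_nonneg p)
          _ = ‖p‖ * C * ‖y‖ := by ring)
      s' hgen
    have hmono : Set.range p ⊆ closure ((Submodule.span ℂ s' : Submodule ℂ H) : Set H) := by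
      rw [hp_range]
      have hK : IsClosed (((Submodule.span ℂ s').topologicalClosure : Submodule ℂ H) : Set H) :=
        Submodule.isClosed_topologicalClosure _
      have hsub : ((Submodule.span ℂ {x : H | ∃ a ∈ A, ∃ h : H, a h = x} : Submodule ℂ H) : Set H)
          ⊆ (((Submodule.span ℂ s').topologicalClosure : Submodule ℂ H) : Set H) := by
        refine SetLike.coe_subset_coe.mpr (Submodule.span_le.mpr ?_)
        rintro y ⟨a, ha, h, rfl⟩
        have h1 : h ∈ closure (D.adjoint.domain : Set H) := hDdense h
        have h2 : a h ∈ closure (a '' (D.adjoint.domain : Set H)) :=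
          image_closure_subset_closure_image a.continuous ⟨h, h1, rfl⟩
        have h3 : a '' (D.adjoint.domain : Set H) ⊆ ((Submodule.span ℂ s' : Submodule ℂ H) : Set H) := by
          rintro _ ⟨z, hz, rfl⟩
          exact Submodule.subset_span ⟨a, ha, ⟨z, hz⟩, rfl⟩
        have h4 := closure_mono h3 h2
        rwa [show (((Submodule.span ℂ s').topologicalClosure : Submodule ℂ H) : Set H)
            = closure ((Submodule.span ℂ s' : Submodule ℂ H) : Set H) from
          Submodule.topologicalClosure_coe _]
      intro y hy
      have h5 := closure_mono hsub hy
      rwa [hK.closure_eq, Submodule.topologicalClosure_coe] at h5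
    have hfin := hkey (p x) (hmono ⟨x, rfl⟩)
    simpa [ContinuousLinearMap.comp_apply] using hfin
  · -- part (3)
    intro hconv
    have key3 : ∀ e : D.adjoint.domain, ∃ hd : p (e : H) ∈ D.domain,
        Tendsto (fun n => pApply D (u n (e : H))) atTop (𝓝 (pApply D (p (e : H)))) := by
      intro e
      obtain ⟨y, hy⟩ := hconv e
      have hmemn : ∀ n, u n (e : H) ∈ D.domain := fun n => hmap (u n) (hu n) (e : H) e.2
      have hx : Tendsto (fun n => u n (e : H)) atTop (𝓝 (p (e : H))) := hstrong_u (e : H)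
      have hgraph : ((p (e : H), y) : H × H) ∈ D.graph := by
        have hmemg : ∀ n, ((u n (e : H), pApply D (u n (e : H))) : H × H) ∈ D.graph := by
          intro n
          rw [pApply_of_mem D (hmemn n)]
          exact D.mem_graph ⟨_, hmemn n⟩
        exact hclosed.mem_of_tendsto (hx.prodMk_nhds hy) (Eventually.of_forall hmemg)
      rw [D.mem_graph_iff] at hgraph
      obtain ⟨z, hz1, hz2⟩ := hgraph
      have hz1' : (z : H) = p (e : H) := hz1
      have hz2' : D z = y := hz2
      have hdom : p (e : H) ∈ D.domain := hz1' ▸ z.2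
      refine ⟨hdom, ?_⟩
      rw [pApply_of_mem D hdom]
      have hDz : D ⟨p (e : H), hdom⟩ = y := by
        rw [← hz2']; congr 1; exact Subtype.ext hz1'.symm
      rw [hDz]; exact hy
    refine ⟨fun e => (key3 e).1, ⟨C, ?_⟩, ?_⟩
    · intro e
      have hlim : Tendsto (fun n => pApply D (u n (e : H)) - u n (D.adjoint e)) atTop
          (𝓝 (pApply D (p (e : H)) - p (D.adjoint e))) :=
        (key3 e).2.sub (hstrong_u (D.adjoint e))
      have hnorm : Tendsto (fun n => ‖pApply D (u n (e : H)) - u n (D.adjoint e)‖) atTop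
          (𝓝 ‖pApply D (p (e : H)) - p (D.adjoint e)‖) := hlim.norm
      exact le_of_tendsto hnorm (Eventually.of_forall fun n => (huC n).2 e)
    · intro e
      exact (key3 e).2.sub (hstrong_u (D.adjoint e))
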